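/- Let M ∈ ℝ^{l×n}, d, y ∈ ℝ^l, β > 0, and let 𝒞 = [0,1]^l ⊂ ℝ^l. Let Π_𝒞 : ℝ^l → ℝ^l be the componentwise projection (Π_𝒞(v))_i = min{max{v_i, 0}, 1}. Define g : ℝ^n → ℝ by g(x) = min_{w ∈ 𝒞} ( −⟨w, Mx + d⟩ + (1/(2β))‖w − y‖² ). Then g is differentiable at every x ∈ ℝ^n with gradient ∇g(x) = −M^⊤ Π_𝒞( y + β(Mx + d) ). -/

import Mathlib

open Matrix


noncomputable def bclamp (u : ℝ) : ℝ := min (max u 0) 1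

lemma sq_max_hasDerivAt (t : ℝ) : HasDerivAt (fun s : ℝ => (max s 0)^2) (2 * max t 0) t := by
  rcases lt_trichotomy t 0 with h | h | h
  · have : (fun s : ℝ => (max s 0)^2) =ᶠ[nhds t] fun _ => (0:ℝ) := by
      filter_upwards [eventually_lt_nhds h] with s hs
      simp [max_eq_right hs.le]
    have h0 : HasDerivAt (fun _ : ℝ => (0:ℝ)) 0 t := hasDerivAt_const t 0
    have := h0.congr_of_eventuallyEq this
    simpa [max_eq_right h.le] using this
  · subst h
    rw [hasDerivAt_iff_isLittleO]
    simp only [max_self, mul_zero, max_eq_right le_rfl, sub_zero, smul_zero]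
    rw [Asymptotics.isLittleO_iff]
    intro c hc
    filter_upwards [Metric.ball_mem_nhds (0:ℝ) hc] with s hs
    simp only [Real.norm_eq_abs, Metric.mem_ball, Real.dist_eq, sub_zero] at hs ⊢
    have h1 : |max s 0| ≤ |s| := by
      rcases le_or_gt s 0 with h | h
      · simp [max_eq_right h]
      · rw [max_eq_left h.le]
    calc |(max s 0)^2 - 0^2| = |max s 0| * |max s 0| := by norm_num [sq, abs_mul]
    _ ≤ c * |s| := by
        apply mul_le_mul (le_of_lt (lt_of_le_of_lt h1 hs)) h1 (abs_nonneg _) hc.le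
  · have : (fun s : ℝ => (max s 0)^2) =ᶠ[nhds t] fun s => s^2 := by
      filter_upwards [eventually_gt_nhds h] with s hs
      simp [max_eq_left hs.le]
    have h0 : HasDerivAt (fun s : ℝ => s^2) (2*t) t := by
      simpa using (hasDerivAt_pow 2 t)
    have := h0.congr_of_eventuallyEq this
    simpa [max_eq_left h.le] using this

lemma bclamp_sq_eq (u : ℝ) : (bclamp u - u)^2 = (max (-u) 0)^2 + (max (u-1) 0)^2 := by
  unfold bclamp
  rcases le_or_gt u 0 with h | h
  · rw [max_eq_right h, min_eq_left (by norm_num), max_eq_left (by linarith), max_eq_right (by linarith)]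
    ring
  rcases le_or_gt u 1 with h1 | h1
  · rw [max_eq_left h.le, min_eq_left h1, max_eq_right (by linarith), max_eq_right (by linarith)]
    ring
  · rw [max_eq_left h.le, min_eq_right h1.le, max_eq_right (by linarith), max_eq_left (by linarith)]
    ring

lemma bclamp_sq_hasDerivAt (u : ℝ) :
    HasDerivAt (fun s : ℝ => (bclamp s - s)^2) (2*(u - bclamp u)) u := by
  have h1 : HasDerivAt (fun s : ℝ => (max (-s) 0)^2) (2 * max (-u) 0 * (-1)) u := by
    exact (sq_max_hasDerivAt (-u)).comp u (hasDerivAt_neg u)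
  have h2 : HasDerivAt (fun s : ℝ => (max (s-1) 0)^2) (2 * max (u-1) 0 * 1) u := by
    exact (sq_max_hasDerivAt (u-1)).comp u ((hasDerivAt_id u).sub_const 1)
  have h3 := h1.add h2
  have heq : (fun s : ℝ => (bclamp s - s)^2) = fun s => (max (-s) 0)^2 + (max (s-1) 0)^2 := by
    funext s; exact bclamp_sq_eq s
  rw [heq]
  refine h3.congr_deriv (Eq.symm ?_)
  unfold bclamp
  rcases le_or_gt u 0 with h | h
  · rw [max_eq_right h, min_eq_left (by norm_num), max_eq_left (by linarith), max_eq_right (by linarith)]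
    ring
  rcases le_or_gt u 1 with hh | hh
  · rw [max_eq_left h.le, min_eq_left hh, max_eq_right (by linarith), max_eq_right (by linarith)]
    ring
  · rw [max_eq_left h.le, min_eq_right hh.le, max_eq_right (by linarith), max_eq_left (by linarith)]
    ring

lemma quad_identity (β : ℝ) (hβ : β ≠ 0) (t a yi : ℝ) :
    -(t*a) + (1/(2*β))*(t-yi)^2 = (1/(2*β))*(t - (yi + β*a))^2 - yi*a - β*a^2/2 := by
  field_simp
  ring

lemma bclamp_nearest {t u : ℝ} (ht : t ∈ Set.Icc (0:ℝ) 1) : (bclamp u - u)^2 ≤ (t - u)^2 := by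
  obtain ⟨h0, h1⟩ := ht
  unfold bclamp
  rcases le_or_gt u 0 with h | h
  · rw [max_eq_right h, min_eq_left (by norm_num)]
    nlinarith
  rcases le_or_gt u 1 with hh | hh
  · rw [max_eq_left h.le, min_eq_left hh]
    nlinarith [sq_nonneg (t-u)]
  · rw [max_eq_left h.le, min_eq_right hh.le]
    nlinarith

noncomputable def phi (β yi a : ℝ) : ℝ :=
  (1/(2*β)) * (bclamp (yi + β*a) - (yi + β*a))^2 - yi * a - β * a^2 / 2

lemma phi_hasDerivAt (β : ℝ) (hβ : 0 < β) (yi a : ℝ) :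
    HasDerivAt (fun s => phi β yi s) (-(bclamp (yi + β*a))) a := by
  have hu : HasDerivAt (fun s : ℝ => yi + β*s) β a := by
    simpa using ((hasDerivAt_id a).const_mul β).const_add yi
  have h1 := ((bclamp_sq_hasDerivAt (yi + β*a)).comp a hu).const_mul (1/(2*β))
  have h2 : HasDerivAt (fun s : ℝ => yi * s) yi a := by
    simpa using (hasDerivAt_id a).const_mul yi
  have h3 := ((hasDerivAt_pow 2 a).const_mul β).div_const 2
  have h4 := (h1.sub h2).sub h3
  unfold phi
  refine h4.congr_deriv (Eq.symm ?_)
  have : β ≠ 0 := hβ.ne'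
  field_simp
  ring

lemma phi_le (β : ℝ) (hβ : 0 < β) (yi a t : ℝ) (ht : t ∈ Set.Icc (0:ℝ) 1) :
    phi β yi a ≤ -(t * a) + (1/(2*β)) * (t - yi)^2 := by
  rw [quad_identity β hβ.ne' t a yi]
  unfold phi
  have h := bclamp_nearest (u := yi + β*a) ht
  have hc : (0:ℝ) ≤ 1/(2*β) := by positivity
  nlinarith [mul_le_mul_of_nonneg_left h hc]

lemma phi_eq (β : ℝ) (hβ : 0 < β) (yi a : ℝ) :
    -(bclamp (yi + β*a) * a) + (1/(2*β)) * (bclamp (yi + β*a) - yi)^2 = phi β yi a := by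
  rw [quad_identity β hβ.ne']
  unfold phi
  ring

lemma sInf_eq_sum (l : ℕ) (β : ℝ) (hβ : 0 < β) (y a : Fin l → ℝ) :
    sInf ((fun w : Fin l → ℝ => -(∑ i, w i * a i) + (1/(2*β)) * ∑ i, (w i - y i)^2) ''
        {w : Fin l → ℝ | ∀ i, w i ∈ Set.Icc (0:ℝ) 1}) = ∑ i, phi β (y i) (a i) := by
  set G : (Fin l → ℝ) → ℝ :=
    fun w => -(∑ i, w i * a i) + (1/(2*β)) * ∑ i, (w i - y i)^2 with hG
  have hsplit : ∀ w : Fin l → ℝ,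
      G w = ∑ i, (-(w i * a i) + (1/(2*β)) * (w i - y i)^2) := by
    intro w
    simp only [hG, Finset.mul_sum, Finset.sum_add_distrib, ← Finset.sum_neg_distrib]
  have hlb : ∀ w ∈ {w : Fin l → ℝ | ∀ i, w i ∈ Set.Icc (0:ℝ) 1},
      ∑ i, phi β (y i) (a i) ≤ G w := by
    intro w hw
    rw [hsplit]
    exact Finset.sum_le_sum fun i _ => phi_le β hβ (y i) (a i) (w i) (hw i)
  have hmem : (fun i => bclamp (y i + β * a i)) ∈
      {w : Fin l → ℝ | ∀ i, w i ∈ Set.Icc (0:ℝ) 1} := by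
    intro i
    unfold bclamp
    exact ⟨le_min (le_max_right _ _) zero_le_one, min_le_right _ _⟩
  have hval : G (fun i => bclamp (y i + β * a i)) = ∑ i, phi β (y i) (a i) := by
    rw [hsplit]
    exact Finset.sum_congr rfl fun i _ => phi_eq β hβ (y i) (a i)
  apply le_antisymm
  · exact csInf_le ⟨∑ i, phi β (y i) (a i), by rintro _ ⟨w, hw, rfl⟩; exact hlb w hw⟩
      ⟨_, hmem, hval⟩
  · exact le_csInf ⟨_, ⟨_, hmem, rfl⟩⟩ (by rintro _ ⟨w, hw, rfl⟩; exact hlb w hw)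


/-- Gradient of `g(x) = min_{w ∈ [0,1]^l} ( -⟨w, Mx + d⟩ + (1/(2β))‖w - y‖² )`:
`∇g(x) = -Mᵀ Π_𝒞(y + β(Mx + d))`, where `Π_𝒞` clamps componentwise to `[0,1]`. -/
theorem gradient_of_box_partial_min (l n : ℕ) (M : Matrix (Fin l) (Fin n) ℝ)
    (d y : Fin l → ℝ) (β : ℝ) (hβ : 0 < β) (x : EuclideanSpace ℝ (Fin n)) :
    HasGradientAt
      (fun z : EuclideanSpace ℝ (Fin n) =>
        sInf ((fun w : Fin l → ℝ =>
            -(∑ i, w i * (M.mulVec (fun j => z j) i + d i)) +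
              (1 / (2 * β)) * ∑ i, (w i - y i) ^ 2) ''
          {w : Fin l → ℝ | ∀ i, w i ∈ Set.Icc (0 : ℝ) 1}))
      ((WithLp.equiv 2 (Fin n → ℝ)).symm
        (-(Mᵀ.mulVec (fun i =>
            min (max (y i + β * (M.mulVec (fun j => x j) i + d i)) 0) 1))))
      x := by
  have hfun : (fun z : EuclideanSpace ℝ (Fin n) =>
      sInf ((fun w : Fin l → ℝ =>
          -(∑ i, w i * (M.mulVec (fun j => z j) i + d i)) +
            (1 / (2 * β)) * ∑ i, (w i - y i) ^ 2) ''
        {w : Fin l → ℝ | ∀ i, w i ∈ Set.Icc (0 : ℝ) 1})) =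
      fun z => ∑ i, phi β (y i) (M.mulVec (fun j => z j) i + d i) := by
    funext z
    exact sInf_eq_sum l β hβ y (fun i => M.mulVec (fun j => z j) i + d i)
  rw [hfun, hasGradientAt_iff_hasFDerivAt]
  have hL : ∀ i : Fin l,
      HasFDerivAt (fun z : EuclideanSpace ℝ (Fin n) => M.mulVec (fun j => z j) i + d i)
        (∑ j, M i j • (EuclideanSpace.proj j : EuclideanSpace ℝ (Fin n) →L[ℝ] ℝ)) x := by
    intro i
    have he : (fun z : EuclideanSpace ℝ (Fin n) => M.mulVec (fun j => z j) i + d i)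
        = fun z => (∑ j, M i j • (EuclideanSpace.proj j :
            EuclideanSpace ℝ (Fin n) →L[ℝ] ℝ)) z + d i := by
      funext z
      simp [Matrix.mulVec, dotProduct, ContinuousLinearMap.sum_apply]
    rw [he]
    exact ((∑ j, M i j • (EuclideanSpace.proj j :
      EuclideanSpace ℝ (Fin n) →L[ℝ] ℝ)).hasFDerivAt).add_const _
  have hterm : ∀ i : Fin l,
      HasFDerivAt (fun z : EuclideanSpace ℝ (Fin n) =>
          phi β (y i) (M.mulVec (fun j => z j) i + d i))
        ((-(bclamp (y i + β * (M.mulVec (fun j => x j) i + d i)))) •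
          (∑ j, M i j • (EuclideanSpace.proj j : EuclideanSpace ℝ (Fin n) →L[ℝ] ℝ))) x :=
    fun i => (phi_hasDerivAt β hβ (y i) _).comp_hasFDerivAt x (hL i)
  have hsum := HasFDerivAt.fun_sum (u := Finset.univ) (fun i _ => hterm i)
  refine hsum.congr_fderiv (Eq.symm ?_)
  apply ContinuousLinearMap.ext
  intro v
  rw [InnerProductSpace.toDual_apply_apply]
  simp only [ContinuousLinearMap.sum_apply, ContinuousLinearMap.smul_apply,
    PiLp.proj_apply, PiLp.inner_apply, RCLike.inner_apply, conj_trivial,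
    WithLp.equiv_symm_apply, WithLp.ofLp_toLp, Pi.neg_apply, Matrix.mulVec, dotProduct,
    Matrix.transpose_apply, smul_eq_mul, neg_mul, Finset.sum_mul, Finset.mul_sum,
    ← Finset.sum_neg_distrib]
  rw [Finset.sum_comm]
  refine Finset.sum_congr rfl fun i _ => Finset.sum_congr rfl fun j _ => ?_
  unfold bclamp
  ring
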